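/- Consider the closed-loop PID consensus network ẋ = L̃⁻¹(P − αL)x + z + L̃⁻¹Δ, ż = −βL̃⁻¹Lx with β > 0, where L is the Laplacian of a connected undirected graph, L̃ = I + γL, P = diag(ρ₁,…,ρ_N) with Σρ_k ≠ 0, and Δ = (δ₁,…,δ_N)ᵀ. Subject to the constraint 𝟙ᵀz = 0 (which is preserved by the dynamics from zero initial integral state), the system has a unique equilibrium given by x* = x_∞𝟙 with x_∞ = −(Σ_k δ_k)/(Σ_k ρ_k) and z* = −L̃⁻¹(Px* + Δ). -/

import Mathlib

open Matrix

theorem unique_equilibrium_of_PID_network (N : ℕ)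
    (L : Matrix (Fin N) (Fin N) ℝ) (hL : L.PosSemidef)
    (hker : ∀ v : Fin N → ℝ, L.mulVec v = 0 ↔ ∃ c : ℝ, v = fun _ => c)
    (γ α β : ℝ) (hγ : 0 ≤ γ) (hα : 0 < α) (hβ : 0 < β)
    (ρ δ : Fin N → ℝ) (hρ : (∑ k, ρ k) ≠ 0) :
    ∀ x z : Fin N → ℝ,
      (((1 + γ • L)⁻¹).mulVec ((Matrix.diagonal ρ - α • L).mulVec x) + z +
            ((1 + γ • L)⁻¹).mulVec δ = 0 ∧
          (β • (((1 + γ • L)⁻¹) * L)).mulVec x = 0 ∧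
          (∑ i, z i) = 0) ↔
        (x = (fun _ => -(∑ k, δ k) / (∑ k, ρ k)) ∧
          z = -(((1 + γ • L)⁻¹).mulVec
            ((Matrix.diagonal ρ).mulVec (fun _ => -(∑ k, δ k) / (∑ k, ρ k)) + δ))) := by
  intro x z
  set M : Matrix (Fin N) (Fin N) ℝ := 1 + γ • L with hM
  have hsym : Lᵀ = L := hL.1
  -- M is positive definite
  have hMpd : M.PosDef := by
    refine Matrix.PosDef.add_posSemidef Matrix.PosDef.one ⟨?_, ?_⟩
    · show (γ • L)ᴴ = γ • L
      rw [conjTranspose_smul]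
      simp [hsym]
    · intro v
      exact (hL.smul hγ).2 v
  have hdet : IsUnit M.det := hMpd.det_pos.ne'.isUnit
  have hinv : M⁻¹ * M = 1 := nonsing_inv_mul M hdet
  have hinv' : M * M⁻¹ = 1 := mul_nonsing_inv M hdet
  have hMsym : Mᵀ = M := by
    rw [hM, transpose_add, transpose_one, transpose_smul, hsym]
  have hMinvsym : (M⁻¹)ᵀ = M⁻¹ := by
    rw [transpose_nonsing_inv, hMsym]
  -- L annihilates constants
  have hLone : ∀ c : ℝ, L.mulVec (fun _ => c) = 0 := fun c => (hker _).mpr ⟨c, rfl⟩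
  -- M fixes the all-ones vector, hence so does M⁻¹
  have hMone : M.mulVec (fun _ => (1:ℝ)) = fun _ => 1 := by
    rw [hM, add_mulVec, one_mulVec, smul_mulVec, hLone 1]
    simp
  have hMinvone : M⁻¹.mulVec (fun _ => (1:ℝ)) = fun _ => 1 := by
    have := congrArg (fun w => M⁻¹.mulVec w) hMone
    simpa [mulVec_mulVec, hinv] using this.symm
  -- column sums of M⁻¹ are 1
  have hcolsum : ∀ j, (∑ i, M⁻¹ i j) = 1 := by
    intro j
    have h1 : ((M⁻¹)ᵀ.mulVec (fun _ => (1:ℝ))) j = 1 := by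
      rw [hMinvsym, hMinvone]
    simpa [mulVec, dotProduct] using h1
  -- summing after applying M⁻¹ preserves the total
  have hsum : ∀ w : Fin N → ℝ, (∑ i, (M⁻¹.mulVec w) i) = ∑ j, w j := by
    intro w
    simp only [mulVec, dotProduct]
    rw [Finset.sum_comm]
    refine Finset.sum_congr rfl fun j _ => ?_
    rw [← Finset.sum_mul, hcolsum j, one_mul]
  constructor
  · rintro ⟨h1, h2, h3⟩
    -- from the second equation, L x = 0, so x is constant
    have hLx : L.mulVec x = 0 := by
      have h2' : M⁻¹.mulVec (L.mulVec x) = 0 := by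
        have := h2
        rw [smul_mulVec] at this
        have h0 : (M⁻¹ * L).mulVec x = 0 := by
          have := smul_eq_zero.mp this
          rcases this with h | h
          · exact absurd h hβ.ne'
          · exact h
        rwa [mulVec_mulVec]
      have := congrArg (fun w => M.mulVec w) h2'
      simpa [mulVec_mulVec, ← Matrix.mul_assoc, hinv'] using this
    obtain ⟨c, hx⟩ := (hker x).mp hLx
    subst hx
    -- simplify the first equation
    have hdiag : (Matrix.diagonal ρ - α • L).mulVec (fun _ => c)
        = (Matrix.diagonal ρ).mulVec (fun _ => c) := by
      rw [sub_mulVec, smul_mulVec, hLone c]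
      simp
    rw [hdiag] at h1
    have hz : z = -(M⁻¹.mulVec ((Matrix.diagonal ρ).mulVec (fun _ => c) + δ)) := by
      rw [mulVec_add]
      refine eq_neg_of_add_eq_zero_left ?_
      rw [← h1]; abel
    -- use the sum constraint to determine c
    have hsumw : (∑ j, ((Matrix.diagonal ρ).mulVec (fun _ => c) + δ) j)
        = c * (∑ k, ρ k) + ∑ k, δ k := by
      simp only [Pi.add_apply, mulVec_diagonal, Finset.sum_add_distrib]
      rw [← Finset.sum_mul]
      ring
    have hc : c * (∑ k, ρ k) + ∑ k, δ k = 0 := by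
      have h3' := h3
      rw [hz] at h3'
      simp only [Pi.neg_apply, Finset.sum_neg_distrib, neg_eq_zero] at h3'
      rw [hsum, hsumw] at h3'
      exact h3'
    have hcval : c = -(∑ k, δ k) / (∑ k, ρ k) := by
      field_simp
      linarith
    constructor
    · funext i; rw [hcval]
    · rw [hz, hcval]
  · rintro ⟨hx, hz⟩
    subst hx hz
    set c : ℝ := -(∑ k, δ k) / (∑ k, ρ k) with hc
    have hLx : L.mulVec (fun _ => c) = 0 := hLone c
    have hdiag : (Matrix.diagonal ρ - α • L).mulVec (fun _ => c)
        = (Matrix.diagonal ρ).mulVec (fun _ => c) := by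
      rw [sub_mulVec, smul_mulVec, hLx]
      simp
    refine ⟨?_, ?_, ?_⟩
    · rw [hdiag, mulVec_add]; abel
    · rw [smul_mulVec, ← mulVec_mulVec, hLx]
      simp
    · have hsumw : (∑ j, ((Matrix.diagonal ρ).mulVec (fun _ => c) + δ) j)
          = c * (∑ k, ρ k) + ∑ k, δ k := by
        simp only [Pi.add_apply, mulVec_diagonal, Finset.sum_add_distrib]
        rw [← Finset.sum_mul]
        ring
      have : c * (∑ k, ρ k) = -(∑ k, δ k) := by
        rw [hc, div_mul_cancel₀ _ hρ]
      simp only [Pi.neg_apply, Finset.sum_neg_distrib, neg_eq_zero]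
      rw [hsum, hsumw, this]
      ring
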